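/- For any signed graph (G,Y), Δ(Y) equals the smallest number of edges that must be removed from G so that the remaining signed graph contains no bad cycle. -/

import Mathlib

open scoped Classical

/-- Cost of a clustering `f` of the vertices. -/
noncomputable def clusterCost {V : Type*} [Fintype V] {β : Type*}
    (G : SimpleGraph V) (Y : Sym2 V → ℤ) (f : V → β) : ℕ :=
  (G.edgeFinset.filter fun e =>
    (Y e = -1 ∧ Sym2.lift ⟨fun u v => f u = f v, fun _ _ => propext eq_comm⟩ e) ∨
    (Y e = 1 ∧ ¬ Sym2.lift ⟨fun u v => f u = f v, fun _ _ => propext eq_comm⟩ e)).card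

/-- Correlation clustering index Δ(Y). -/
noncomputable def ccIndex {V : Type*} [Fintype V] (G : SimpleGraph V) (Y : Sym2 V → ℤ) : ℕ :=
  sInf {c | ∃ f : V → ℕ, clusterCost G Y f = c}

/-- A bad cycle: a simple cycle containing exactly one negative edge. -/
def IsBadCycle {V : Type*} (G : SimpleGraph V) (Y : Sym2 V → ℤ) {v : V}
    (c : G.Walk v v) : Prop :=
  c.IsCycle ∧ c.edges.countP (fun e => decide (Y e = -1)) = 1

section Aux
variable {V : Type*}

/-- The subgraph of positive edges. -/
def posSub (G' : SimpleGraph V) (Y : Sym2 V → ℤ) : SimpleGraph V where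
  Adj a b := G'.Adj a b ∧ Y s(a,b) = 1
  symm := ⟨fun a b h => ⟨h.1.symm, by rw [Sym2.eq_swap]; exact h.2⟩⟩
  loopless := ⟨fun a h => G'.loopless.irrefl a h.1⟩

lemma posSub_le (G' : SimpleGraph V) (Y : Sym2 V → ℤ) : posSub G' Y ≤ G' :=
  fun _ _ h => h.1

lemma posSub_edge_pos {G' : SimpleGraph V} {Y : Sym2 V → ℤ} {e : Sym2 V}
    (he : e ∈ (posSub G' Y).edgeSet) : Y e = 1 := by
  induction e using Sym2.inductionOn with
  | hf a b => exact he.2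

/-- Walk parity lemma for the forward direction. -/
lemma walk_lemma {β : Type*} {G' : SimpleGraph V} {Y : Sym2 V → ℤ} {f : V → β}
    (h : ∀ a b, G'.Adj a b → (Y s(a,b) = -1 → f a ≠ f b) ∧ (Y s(a,b) ≠ -1 → f a = f b))
    {u v : V} (p : G'.Walk u v) :
    (p.edges.countP (fun e => decide (Y e = -1)) = 0 → f u = f v) ∧
    (p.edges.countP (fun e => decide (Y e = -1)) = 1 → f u ≠ f v) := by
  induction p with
  | nil => simp
  | cons ha q ih =>
    rename_i a b c
    rw [SimpleGraph.Walk.edges_cons, List.countP_cons]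
    by_cases hneg : Y s(a,b) = -1
    · have hne := (h a b ha).1 hneg
      rw [if_pos (by simp [hneg])]
      refine ⟨fun h0 => absurd h0 (by omega), fun h1 => ?_⟩
      have : q.edges.countP (fun e => decide (Y e = -1)) = 0 := by omega
      exact fun hfc => hne (hfc.trans (ih.1 this).symm)
    · have heq := (h a b ha).2 hneg
      rw [if_neg (by simp [hneg]), Nat.add_zero]
      exact ⟨fun h0 => heq.trans (ih.1 h0), fun h1 => heq ▸ ih.2 h1⟩

/-- Forward direction: a clustering yields an edge-deletion set of the same size. -/
lemma lemA [Fintype V] (G : SimpleGraph V) (Y : Sym2 V → ℤ)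
    (hY : ∀ e ∈ G.edgeSet, Y e = 1 ∨ Y e = -1) (f : V → ℕ) :
    ∃ F : Finset (Sym2 V), ↑F ⊆ G.edgeSet ∧ F.card = clusterCost G Y f ∧
      ∀ (v : V) (c : (G.deleteEdges ↑F).Walk v v), ¬ IsBadCycle (G.deleteEdges ↑F) Y c := by
  refine ⟨G.edgeFinset.filter fun e =>
    (Y e = -1 ∧ Sym2.lift ⟨fun u v => f u = f v, fun _ _ => propext eq_comm⟩ e) ∨
    (Y e = 1 ∧ ¬ Sym2.lift ⟨fun u v => f u = f v, fun _ _ => propext eq_comm⟩ e),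
    ?_, rfl, ?_⟩
  · intro e he
    simp only [Finset.coe_filter, Set.mem_setOf_eq] at he
    exact (SimpleGraph.mem_edgeFinset).1 he.1
  · rintro v c ⟨hcyc, hcount⟩
    refine (walk_lemma (f := f) (Y := Y) ?_ c).2 hcount rfl
    intro a b hab
    rw [SimpleGraph.deleteEdges_adj] at hab
    obtain ⟨hGab, hnF⟩ := hab
    have hmem : s(a,b) ∈ G.edgeFinset := SimpleGraph.mem_edgeFinset.2 hGab
    simp only [Finset.mem_coe, Finset.mem_filter, hmem, true_and, not_or, not_and,
      Sym2.lift_mk, not_not] at hnF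
    constructor
    · intro hneg hfab
      exact (hnF.1 hneg) hfab
    · intro hneq
      have hpos : Y s(a,b) = 1 := by
        rcases hY s(a,b) ((SimpleGraph.mem_edgeSet G).2 hGab) with h1 | h1
        · exact h1
        · exact absurd h1 hneq
      exact hnF.2 hpos

/-- Backward direction: a good edge-deletion set yields a clustering of at most that cost. -/
lemma lemB [Fintype V] (G : SimpleGraph V) (Y : Sym2 V → ℤ) (F : Finset (Sym2 V))
    (hno : ∀ (v : V) (c : (G.deleteEdges ↑F).Walk v v), ¬ IsBadCycle (G.deleteEdges ↑F) Y c) :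
    ∃ f : V → ℕ, clusterCost G Y f ≤ F.card := by
  set G' := G.deleteEdges (↑F : Set (Sym2 V)) with hG'
  set Gp := posSub G' Y with hGp
  obtain ⟨g, hg⟩ := (countable_iff_exists_injective Gp.ConnectedComponent).1 inferInstance
  set f : V → ℕ := fun v => g (Gp.connectedComponentMk v) with hf
  refine ⟨f, ?_⟩
  unfold clusterCost
  apply le_trans (Finset.card_le_card ?_) le_rfl
  intro e he
  induction e using Sym2.inductionOn with
  | hf a b =>
    simp only [Finset.mem_filter, SimpleGraph.mem_edgeFinset, Sym2.lift_mk] at he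
    obtain ⟨hGab, hP⟩ := he
    rw [SimpleGraph.mem_edgeSet] at hGab
    by_contra hnF
    have hG'ab : G'.Adj a b := by
      rw [hG', SimpleGraph.deleteEdges_adj]
      exact ⟨hGab, by simpa using hnF⟩
    rcases hP with ⟨hneg, hsame⟩ | ⟨hpos, hdiff⟩
    · -- negative edge within a component: build a bad cycle
      have hreach : Gp.Reachable a b := by
        rw [← SimpleGraph.ConnectedComponent.eq]
        exact hg hsame
      obtain ⟨w⟩ := hreach
      set p : Gp.Path a b := w.toPath with hp
      have hedges : ∀ e ∈ (p : Gp.Walk a b).edges, e ∈ G'.edgeSet := fun e heE =>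
        SimpleGraph.edgeSet_mono (posSub_le G' Y)
          ((p : Gp.Walk a b).edges_subset_edgeSet heE)
      set p' : G'.Walk a b := (p : Gp.Walk a b).transfer G' hedges with hp'
      have hp'path : p'.IsPath := SimpleGraph.Walk.IsPath.transfer hedges p.2
      have hp'edges : p'.edges = (p : Gp.Walk a b).edges :=
        SimpleGraph.Walk.edges_transfer _ hedges
      have hposedges : ∀ e ∈ p'.edges, Y e = 1 := by
        intro e heE
        rw [hp'edges] at heE
        exact posSub_edge_pos ((p : Gp.Walk a b).edges_subset_edgeSet heE)
      have hba : G'.Adj b a := hG'ab.symm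
      have hnotmem : s(b,a) ∉ p'.edges := by
        intro hmem
        have := hposedges _ hmem
        rw [Sym2.eq_swap] at this
        rw [hneg] at this
        norm_num at this
      have hcyc : (SimpleGraph.Walk.cons hba p').IsCycle :=
        SimpleGraph.Path.cons_isCycle ⟨p', hp'path⟩ hba hnotmem
      have hcnt : (SimpleGraph.Walk.cons hba p').edges.countP
          (fun e => decide (Y e = -1)) = 1 := by
        rw [SimpleGraph.Walk.edges_cons, List.countP_cons]
        have h0 : p'.edges.countP (fun e => decide (Y e = -1)) = 0 := by
          rw [List.countP_eq_zero]
          intro e heE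
          simp [hposedges e heE]
        rw [h0, if_pos (by simp [Sym2.eq_swap (a := b) (b := a), hneg])]
      exact hno b (SimpleGraph.Walk.cons hba p') ⟨hcyc, hcnt⟩
    · -- positive edge between components: impossible
      have : Gp.Adj a b := ⟨hG'ab, hpos⟩
      exact hdiff (congrArg g (SimpleGraph.ConnectedComponent.eq.2 this.reachable))

end Aux

/-- Δ(Y) is the smallest number of edges whose removal eliminates all bad cycles. -/
theorem stmt1 {V : Type*} [Fintype V] (G : SimpleGraph V) (Y : Sym2 V → ℤ)
    (hY : ∀ e ∈ G.edgeSet, Y e = 1 ∨ Y e = -1) :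
    ccIndex G Y =
      sInf {k | ∃ F : Finset (Sym2 V), ↑F ⊆ G.edgeSet ∧ F.card = k ∧
        ∀ (v : V) (c : (G.deleteEdges ↑F).Walk v v),
          ¬ IsBadCycle (G.deleteEdges ↑F) Y c} := by
  have hS : {c | ∃ f : V → ℕ, clusterCost G Y f = c}.Nonempty :=
    ⟨clusterCost G Y (fun _ => 0), ⟨fun _ => 0, rfl⟩⟩
  have hT : {k | ∃ F : Finset (Sym2 V), ↑F ⊆ G.edgeSet ∧ F.card = k ∧
      ∀ (v : V) (c : (G.deleteEdges ↑F).Walk v v),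
        ¬ IsBadCycle (G.deleteEdges ↑F) Y c}.Nonempty := by
    refine ⟨G.edgeFinset.card, G.edgeFinset, by simp, rfl, ?_⟩
    rintro v c ⟨hcyc, hcount⟩
    have hpos : 0 < c.edges.countP (fun e => decide (Y e = -1)) := by omega
    rw [List.countP_pos_iff] at hpos
    obtain ⟨e, heE, -⟩ := hpos
    have := c.edges_subset_edgeSet heE
    rw [SimpleGraph.edgeSet_deleteEdges] at this
    exact this.2 (by simpa [SimpleGraph.coe_edgeFinset] using this.1)
  unfold ccIndex
  apply le_antisymm
  · obtain ⟨F, hFsub, hcard, hno⟩ := Nat.sInf_mem hT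
    obtain ⟨f, hfle⟩ := lemB G Y F hno
    exact le_trans (Nat.sInf_le ⟨f, rfl⟩) (le_of_le_of_eq hfle hcard)
  · obtain ⟨f, hfeq⟩ := Nat.sInf_mem hS
    obtain ⟨F, h1, h2, h3⟩ := lemA G Y hY f
    exact Nat.sInf_le ⟨F, h1, by rw [h2, hfeq], h3⟩
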